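/- arXiv:1808.07841 — 3 statements merged into one kernel-verified Lean document; each statement's English description precedes it below -/
import Mathlib

section
/- Let r₀ > 0, T > 0, m > 0, set A₀ = 4π·r₀², and for each i ∈ ℕ let F_i : [0,T] → ℝ with associated m_i : [0,T] → ℝ defined by m_i(t) = √(A₀·e^t/(16π)³)·(16π − F_i(t)). Assume each m_i is nondecreasing on [0,T], m_i(T) − m_i(0) → 0, and m_i(0) → m as i → ∞. Then for every t ∈ [0,T], F_i(t)/(A₀·e^t) → (4/r₀²)·(1 − (2m/r₀)·e^{−t/2})·e^{−t} as i → ∞. -/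
open Real Set Filter

/-- RPI-stability setting: if the (abstract) Hawking masses `mH i` are
nondecreasing, `mH i T - mH i 0 → 0`, and `mH i 0 → m > 0`, then the averages
`F i t / (A₀ e^t)` converge to `(4/r₀²)(1 - (2m/r₀)e^{-t/2})e^{-t}`. -/
theorem stmt2 (r₀ T m : ℝ) (hr₀ : 0 < r₀) (hT : 0 < T) (hmpos : 0 < m)
    (A₀ : ℝ) (hA₀ : A₀ = 4 * π * r₀ ^ 2)
    (F mH : ℕ → ℝ → ℝ)
    (hmH : ∀ i t, mH i t = Real.sqrt (A₀ * Real.exp t / (16 * π) ^ 3) * (16 * π - F i t))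
    (hmono : ∀ i, MonotoneOn (mH i) (Icc (0 : ℝ) T))
    (hdiff : Tendsto (fun i => mH i T - mH i 0) atTop (nhds 0))
    (h0 : Tendsto (fun i => mH i 0) atTop (nhds m)) :
    ∀ t ∈ Icc (0 : ℝ) T,
      Tendsto (fun i => F i t / (A₀ * Real.exp t)) atTop
        (nhds ((4 / r₀ ^ 2) * (1 - (2 * m / r₀) * Real.exp (-t / 2)) * Real.exp (-t))) := by
  intro t ht
  have hπ := Real.pi_pos
  set c : ℝ := r₀ * Real.exp (t / 2) / (32 * π) with hc
  have hcpos : 0 < c := by positivity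
  have hsq : Real.sqrt (A₀ * Real.exp t / (16 * π) ^ 3) = c := by
    have he : Real.exp t = Real.exp (t / 2) ^ 2 := by
      rw [sq, ← Real.exp_add]; ring_nf
    have : A₀ * Real.exp t / (16 * π) ^ 3 = c ^ 2 := by
      rw [hc, hA₀, he]; field_simp; ring
    rw [this, Real.sqrt_sq hcpos.le]
  -- squeeze: mH i t → m
  have h0mem : (0 : ℝ) ∈ Icc (0 : ℝ) T := ⟨le_refl _, hT.le⟩
  have hTmem : T ∈ Icc (0 : ℝ) T := ⟨hT.le, le_refl _⟩
  have hupper : Tendsto (fun i => mH i T) atTop (nhds m) := by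
    have := hdiff.add h0
    simpa using this
  have hmt : Tendsto (fun i => mH i t) atTop (nhds m) :=
    tendsto_of_tendsto_of_tendsto_of_le_of_le h0 hupper
      (fun i => hmono i h0mem ht ht.1) (fun i => hmono i ht hTmem ht.2)
  -- F i t = 16π - mH i t / c
  have hF : ∀ i, F i t = 16 * π - mH i t / c := by
    intro i
    rw [hmH i t, hsq]
    field_simp
    ring
  have hAe : 0 < A₀ * Real.exp t := by rw [hA₀]; positivity
  have hlim : Tendsto (fun i => F i t / (A₀ * Real.exp t)) atTop
      (nhds ((16 * π - m / c) / (A₀ * Real.exp t))) := by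
    simp only [hF]
    exact ((tendsto_const_nhds.sub (hmt.div_const c)).div_const _)
  convert hlim using 2
  rw [hc, hA₀]
  have h1 : Real.exp (-t / 2) * Real.exp (t / 2) = 1 := by
    rw [← Real.exp_add]; ring_nf; exact Real.exp_zero
  have h2 : Real.exp (-t) * Real.exp t = 1 := by
    rw [← Real.exp_add]; simp
  field_simp
  have h3 : Real.exp (-(t/2)) * Real.exp (t/2) = 1 := by
    rw [← Real.exp_add]; simp
  linear_combination (16*r₀*Real.exp (t/2) - 32*m*Real.exp (-(t/2))*Real.exp (t/2)) * h2 - 32*m * h3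
end

section
/- Let r₀ > 0, T > 0, set A₀ = 4π·r₀², and for each i ∈ ℕ let F_i : [0,T] → ℝ be continuously differentiable, with associated m_i : [0,T] → ℝ defined by m_i(t) = √(A₀·e^t/(16π)³)·(16π − F_i(t)). Assume each m_i is nondecreasing on [0,T], m_i(0) ≥ 0 for all i, and m_i(T) → 0 as i → ∞. Then ∫₀^T |F_i'(t)| dt → 0 as i → ∞; that is, the derivatives F_i' converge to 0 in L¹([0,T]). -/
open Real Set Filter

/-- A monotone function on a nontrivial closed interval has nonnegative
derivative within the interval at every point of the interval. -/
lemma aux_hasDerivWithinAt_nonneg {a b : ℝ} (hab : a < b) {m : ℝ → ℝ} {v t : ℝ}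
    (hmono : MonotoneOn m (Icc a b)) (ht : t ∈ Icc a b)
    (hd : HasDerivWithinAt m v (Icc a b) t) : 0 ≤ v := by
  have hslope := hasDerivWithinAt_iff_tendsto_slope.1 hd
  have hev : ∀ y ∈ Icc a b \ {t}, 0 ≤ slope m t y := by
    intro y hy
    have hyne : y ≠ t := hy.2
    rw [slope_def_field]
    rcases lt_or_gt_of_ne hyne with h | h
    · rw [← neg_div_neg_eq]
      exact div_nonneg (by have := hmono hy.1 ht h.le; linarith) (by linarith)
    · exact div_nonneg (by have := hmono ht hy.1 h.le; linarith) (by linarith)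
  have hne : (nhdsWithin t (Icc a b \ {t})).NeBot := by
    rcases eq_or_lt_of_le ht.2 with heq | hlt
    · subst heq
      have h1 : Ioo a t ⊆ Icc a t \ {t} := fun y hy =>
        ⟨⟨hy.1.le, hy.2.le⟩, (by simpa using ne_of_lt hy.2)⟩
      exact (right_nhdsWithin_Ioo_neBot hab).mono (nhdsWithin_mono _ h1)
    · have h1 : Ioo t b ⊆ Icc a b \ {t} := fun y hy =>
        ⟨⟨ht.1.trans hy.1.le, hy.2.le⟩, (by simpa using ne_of_gt hy.1)⟩
      exact (left_nhdsWithin_Ioo_neBot hlt).mono (nhdsWithin_mono _ h1)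
  exact ge_of_tendsto hslope (eventually_nhdsWithin_of_forall hev)

/-- in the PMT-stability setting, the derivatives `F_i'` converge
to `0` in `L¹([0,T])`. -/
theorem stmt4 (r₀ T : ℝ) (hr₀ : 0 < r₀) (hT : 0 < T)
    (A₀ : ℝ) (hA₀ : A₀ = 4 * π * r₀ ^ 2)
    (F mH : ℕ → ℝ → ℝ)
    (hF : ∀ i, ContDiffOn ℝ 1 (F i) (Icc (0 : ℝ) T))
    (hm : ∀ i t, mH i t = Real.sqrt (A₀ * Real.exp t / (16 * π) ^ 3) * (16 * π - F i t))
    (hmono : ∀ i, MonotoneOn (mH i) (Icc (0 : ℝ) T))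
    (hm0 : ∀ i, 0 ≤ mH i 0)
    (hmT : Tendsto (fun i => mH i T) atTop (nhds 0)) :
    Tendsto (fun i => ∫ t in (0 : ℝ)..T, |derivWithin (F i) (Icc (0 : ℝ) T) t|)
      atTop (nhds 0) := by
  have hπ : (0 : ℝ) < π := Real.pi_pos
  have hA0pos : 0 < A₀ := by rw [hA₀]; positivity
  set K : ℝ := Real.sqrt (A₀ / (16 * π) ^ 3) with hK
  have hKpos : 0 < K := Real.sqrt_pos.2 (by positivity)
  -- rewrite the Hawking mass using `K`
  have hmK : ∀ i t, mH i t = K * Real.exp (t / 2) * (16 * π - F i t) := by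
    intro i t
    rw [hm]
    congr 1
    have h1 : A₀ * Real.exp t / (16 * π) ^ 3 = (A₀ / (16 * π) ^ 3) * Real.exp t := by ring
    rw [h1, Real.sqrt_mul (by positivity), ← Real.exp_half, hK]
  have hunique : UniqueDiffOn ℝ (Icc (0 : ℝ) T) := uniqueDiffOn_Icc hT
  -- notation for the derivative
  set D : ℕ → ℝ → ℝ := fun i t => derivWithin (F i) (Icc (0 : ℝ) T) t with hD
  set G : ℕ → ℝ → ℝ := fun i t => K * Real.exp t * (16 * π - F i t) with hG
  set G' : ℕ → ℝ → ℝ := fun i t => K * Real.exp t * ((16 * π - F i t) - D i t) with hG'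
  have key : ∀ i, (0 ≤ ∫ t in (0 : ℝ)..T, |D i t|) ∧
      (∫ t in (0 : ℝ)..T, |D i t|) ≤ (Real.exp (T / 2) / K) * mH i T := by
    intro i
    have hFd : DifferentiableOn ℝ (F i) (Icc (0 : ℝ) T) := (hF i).differentiableOn one_ne_zero
    have hFc : ContinuousOn (F i) (Icc (0 : ℝ) T) := (hF i).continuousOn
    have hDc : ContinuousOn (D i) (Icc (0 : ℝ) T) :=
      (hF i).continuousOn_derivWithin hunique le_rfl
    have hmnn : ∀ t ∈ Icc (0 : ℝ) T, 0 ≤ mH i t := fun t ht =>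
      (hm0 i).trans (hmono i (left_mem_Icc.2 hT.le) ht ht.1)
    -- nonnegativity of 16π - F i t
    have hann : ∀ t ∈ Icc (0 : ℝ) T, 0 ≤ 16 * π - F i t := by
      intro t ht
      have h0 : 0 ≤ K * Real.exp (t / 2) * (16 * π - F i t) := by
        rw [← hmK]; exact hmnn t ht
      have hc : 0 < K * Real.exp (t / 2) := by positivity
      nlinarith [h0, hc]
    -- derivative of mH i within the interval
    have hm' : ∀ t ∈ Icc (0 : ℝ) T,
        HasDerivWithinAt (mH i)
          (K * Real.exp (t / 2) * ((16 * π - F i t) / 2 - D i t)) (Icc (0 : ℝ) T) t := by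
      intro t ht
      have hme : mH i = fun t => K * Real.exp (t / 2) * (16 * π - F i t) := funext (hmK i)
      rw [hme]
      have h1 : HasDerivAt (fun u : ℝ => K * Real.exp (u / 2))
          (K * (Real.exp (t / 2) * (1 / 2))) t := by
        have := (Real.hasDerivAt_exp (t / 2)).comp t ((hasDerivAt_id t).div_const 2)
        simpa using this.const_mul K
      have h2 : HasDerivWithinAt (fun u => 16 * π - F i u) (0 - D i t) (Icc (0 : ℝ) T) t :=
        (hasDerivWithinAt_const _ _ _).sub (hFd t ht).hasDerivWithinAt
      have := h1.hasDerivWithinAt.mul h2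
      exact this.congr_deriv (by ring)
    -- monotonicity ⇒ D i t ≤ (16π - F i t)/2 on Icc
    have hDle : ∀ t ∈ Icc (0 : ℝ) T, D i t ≤ (16 * π - F i t) / 2 := by
      intro t ht
      have h0 : 0 ≤ K * Real.exp (t / 2) * ((16 * π - F i t) / 2 - D i t) :=
        aux_hasDerivWithinAt_nonneg hT (hmono i) ht (hm' t ht)
      have hc : 0 < K * Real.exp (t / 2) := by positivity
      nlinarith [h0, hc]
    -- pointwise bound |D i t| ≤ (1/K) * G' i t on Icc
    have hbound : ∀ t ∈ Icc (0 : ℝ) T, |D i t| ≤ (1 / K) * G' i t := by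
      intro t ht
      have ha := hann t ht
      have hd := hDle t ht
      have he : (1 : ℝ) ≤ Real.exp t := Real.one_le_exp ht.1
      have habs : |D i t| ≤ (16 * π - F i t) - D i t := by
        rcases abs_cases (D i t) with ⟨h1, h2⟩ | ⟨h1, h2⟩ <;> rw [h1] <;> linarith
      have hrw : (1 / K) * G' i t = Real.exp t * ((16 * π - F i t) - D i t) := by
        rw [hG']; field_simp
      rw [hrw]
      nlinarith [habs, he, abs_nonneg (D i t)]
    -- continuity and integrability
    have hGc : ContinuousOn (G i) (Icc (0 : ℝ) T) :=
      (continuous_const.mul Real.continuous_exp).continuousOn.mul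
        (continuousOn_const.sub hFc)
    have hG'c : ContinuousOn (G' i) (Icc (0 : ℝ) T) :=
      (continuous_const.mul Real.continuous_exp).continuousOn.mul
        ((continuousOn_const.sub hFc).sub hDc)
    have hG'int : IntervalIntegrable (G' i) MeasureTheory.volume 0 T := by
      apply ContinuousOn.intervalIntegrable
      rwa [uIcc_of_le hT.le]
    have hDint : IntervalIntegrable (fun t => |D i t|) MeasureTheory.volume 0 T := by
      apply ContinuousOn.intervalIntegrable
      rw [uIcc_of_le hT.le]
      exact hDc.abs
    -- FTC for G
    have hftc : (∫ t in (0 : ℝ)..T, G' i t) = G i T - G i 0 := by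
      apply intervalIntegral.integral_eq_sub_of_hasDeriv_right_of_le hT.le hGc _ hG'int
      intro x hx
      have hxI : x ∈ Icc (0 : ℝ) T := Ioo_subset_Icc_self hx
      have hGd : HasDerivWithinAt (G i) (G' i x) (Icc (0 : ℝ) T) x := by
        have h1 : HasDerivAt (fun u : ℝ => K * Real.exp u) (K * Real.exp x) x :=
          (Real.hasDerivAt_exp x).const_mul K
        have h2 : HasDerivWithinAt (fun u => 16 * π - F i u) (0 - D i x) (Icc (0 : ℝ) T) x :=
          (hasDerivWithinAt_const _ _ _).sub (hFd x hxI).hasDerivWithinAt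
        have := h1.hasDerivWithinAt.mul h2
        exact this.congr_deriv (by rw [hG']; ring)
      exact ((hGd.hasDerivAt (Icc_mem_nhds hx.1 hx.2)).hasDerivWithinAt)
    -- integral comparison
    have hcomp : (∫ t in (0 : ℝ)..T, |D i t|) ≤ ∫ t in (0 : ℝ)..T, (1 / K) * G' i t := by
      apply intervalIntegral.integral_mono_on hT.le hDint (hG'int.const_mul _) hbound
    have hval : (∫ t in (0 : ℝ)..T, (1 / K) * G' i t) = (1 / K) * (G i T - G i 0) := by
      rw [intervalIntegral.integral_const_mul, hftc]
    have hGT : G i T = Real.exp (T / 2) * mH i T := by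
      simp only [hG]
      rw [hmK]
      have hsq : Real.exp T = Real.exp (T / 2) * Real.exp (T / 2) := by
        rw [← Real.exp_add]; ring_nf
      rw [hsq]; ring
    have hG0 : G i 0 = mH i 0 := by
      simp only [hG]; rw [hmK]; norm_num
    constructor
    · exact intervalIntegral.integral_nonneg hT.le (fun u _ => abs_nonneg _)
    · calc (∫ t in (0 : ℝ)..T, |D i t|) ≤ (1 / K) * (G i T - G i 0) := by
            rw [← hval]; exact hcomp
        _ ≤ (1 / K) * (G i T) := by
            have := hm0 i
            rw [hG0]
            have h1K : 0 ≤ 1 / K := by positivity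
            nlinarith
        _ = (Real.exp (T / 2) / K) * mH i T := by rw [hGT]; ring
  -- squeeze
  have hup : Tendsto (fun i => (Real.exp (T / 2) / K) * mH i T) atTop (nhds 0) := by
    have := hmT.const_mul (Real.exp (T / 2) / K)
    simpa using this
  exact tendsto_of_tendsto_of_tendsto_of_le_of_le tendsto_const_nhds hup
    (fun i => (key i).1) (fun i => (key i).2)
end

section
/- Let r₀ > 0, T > 0, m > 0, set A₀ = 4π·r₀², and for each i ∈ ℕ let F_i : [0,T] → ℝ be continuously differentiable, with associated m_i : [0,T] → ℝ defined by m_i(t) = √(A₀·e^t/(16π)³)·(16π − F_i(t)). Assume each m_i is nondecreasing on [0,T], m_i(T) − m_i(0) → 0, and m_i(0) → m as i → ∞. Then ∫₀^T |F_i'(t) − (16π/r₀)·m·e^{−t/2}| dt → 0 as i → ∞; that is, F_i' converges in L¹([0,T]) to the function t ↦ (16π/r₀)·m·e^{−t/2}. -/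
open Real Set Filter

lemma aux_deriv_nonneg {f : ℝ → ℝ} {a b x f' : ℝ} (hab : a < b) (hx : x ∈ Icc a b)
    (hm : MonotoneOn f (Icc a b)) (hd : HasDerivWithinAt f f' (Icc a b) x) : 0 ≤ f' := by
  rw [hasDerivWithinAt_iff_tendsto_slope] at hd
  have hne : (nhdsWithin x (Icc a b \ {x})).NeBot := by
    rw [← mem_closure_iff_nhdsWithin_neBot]
    rcases lt_or_eq_of_le hx.2 with h | h
    · have hsub : Ioc x b ⊆ Icc a b \ {x} := fun y hy =>
        ⟨⟨hx.1.trans hy.1.le, hy.2⟩, (ne_of_gt hy.1)⟩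
      refine closure_mono hsub ?_
      rw [closure_Ioc h.ne]
      exact ⟨le_rfl, h.le⟩
    · have hax : a < x := h ▸ hab
      have hsub : Ico a x ⊆ Icc a b \ {x} := fun y hy =>
        ⟨⟨hy.1, hy.2.le.trans hx.2⟩, ne_of_lt hy.2⟩
      refine closure_mono hsub ?_
      rw [closure_Ico hax.ne]
      exact ⟨hax.le, le_rfl⟩
  refine ge_of_tendsto hd ?_
  filter_upwards [self_mem_nhdsWithin] with y hy
  obtain ⟨hyI, hyx⟩ := hy
  have hyx' : y ≠ x := hyx
  rw [slope_def_field]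
  rcases lt_or_gt_of_ne hyx' with h | h
  · have h1 : 0 ≤ (f x - f y) / (x - y) :=
      div_nonneg (sub_nonneg.2 (hm hyI hx h.le)) (sub_nonneg.2 h.le)
    rwa [show f y - f x = -(f x - f y) by ring, show y - x = -(x - y) by ring,
      neg_div_neg_eq]
  · exact div_nonneg (sub_nonneg.2 (hm hx hyI h.le)) (sub_nonneg.2 h.le)

set_option maxHeartbeats 2000000 in
/-- in the RPI-stability setting, the derivatives `F_i'` converge
in `L¹([0,T])` to `t ↦ (16π/r₀) m e^{-t/2}`. -/
theorem stmt5 (r₀ T m : ℝ) (hr₀ : 0 < r₀) (hT : 0 < T) (hmpos : 0 < m)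
    (A₀ : ℝ) (hA₀ : A₀ = 4 * π * r₀ ^ 2)
    (F mH : ℕ → ℝ → ℝ)
    (hF : ∀ i, ContDiffOn ℝ 1 (F i) (Icc (0 : ℝ) T))
    (hmH : ∀ i t, mH i t = Real.sqrt (A₀ * Real.exp t / (16 * π) ^ 3) * (16 * π - F i t))
    (hmono : ∀ i, MonotoneOn (mH i) (Icc (0 : ℝ) T))
    (hdiff : Tendsto (fun i => mH i T - mH i 0) atTop (nhds 0))
    (h0 : Tendsto (fun i => mH i 0) atTop (nhds m)) :
    Tendsto (fun i => ∫ t in (0 : ℝ)..T,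
        |derivWithin (F i) (Icc (0 : ℝ) T) t - (16 * π / r₀) * m * Real.exp (-t / 2)|)
      atTop (nhds 0) := by
  have hπ : (0:ℝ) < π := Real.pi_pos
  set cc : ℝ → ℝ := fun t => r₀ / (32 * π) * Real.exp (t / 2) with hcc_def
  set G : ℕ → ℝ → ℝ := fun i t => derivWithin (F i) (Icc (0 : ℝ) T) t with hG_def
  set g : ℕ → ℝ → ℝ := fun i t => mH i t / 2 - cc t * G i t with hg_def
  set K : ℝ := 32 * π / r₀ with hK_def
  show Tendsto (fun i => ∫ t in (0:ℝ)..T,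
      |G i t - 16 * π / r₀ * m * Real.exp (-t / 2)|) atTop (nhds 0)
  have hcpos : ∀ t, 0 < cc t := fun t => by positivity
  have hKpos : 0 < K := by positivity
  have hsqrt : ∀ t, Real.sqrt (A₀ * Real.exp t / (16 * π) ^ 3) = cc t := by
    intro t
    have he : Real.exp (t / 2) * Real.exp (t / 2) = Real.exp t := by
      rw [← Real.exp_add]; norm_num
    have h1 : A₀ * Real.exp t / (16 * π) ^ 3 = (cc t) ^ 2 := by
      calc A₀ * Real.exp t / (16 * π) ^ 3
          = (r₀ / (32 * π)) ^ 2 * Real.exp t := by rw [hA₀]; field_simp; ring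
        _ = (r₀ / (32 * π)) ^ 2 * (Real.exp (t / 2) * Real.exp (t / 2)) := by rw [he]
        _ = (cc t) ^ 2 := by simp only [hcc_def]; ring
    rw [h1, Real.sqrt_sq (hcpos t).le]
  have hccF : ∀ i t, mH i t = cc t * (16 * π - F i t) := by
    intro i t; rw [hmH, hsqrt]
  have hUD : UniqueDiffOn ℝ (Icc (0:ℝ) T) := uniqueDiffOn_Icc hT
  have hFd : ∀ i, ∀ t ∈ Icc (0:ℝ) T, HasDerivWithinAt (F i) (G i t) (Icc (0:ℝ) T) t :=
    fun i t ht => (((hF i).differentiableOn one_ne_zero) t ht).hasDerivWithinAt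
  have hccd : ∀ t, HasDerivAt cc (cc t / 2) t := by
    intro t
    have h1 : HasDerivAt (fun s : ℝ => s / 2) (1 / 2 : ℝ) t := by
      simpa using (hasDerivAt_id t).div_const 2
    have h2 := (Real.hasDerivAt_exp (t / 2)).comp t h1
    have h3 := h2.const_mul (r₀ / (32 * π))
    refine h3.congr_deriv ?_
    simp only [hcc_def]
    ring
  have hmHd : ∀ i, ∀ t ∈ Icc (0:ℝ) T, HasDerivWithinAt (mH i) (g i t) (Icc (0:ℝ) T) t := by
    intro i t ht
    have h1 : HasDerivWithinAt (fun s => cc s * (16 * π - F i s))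
        (cc t / 2 * (16 * π - F i t) + cc t * (0 - G i t)) (Icc (0:ℝ) T) t :=
      (hccd t).hasDerivWithinAt.mul ((hasDerivWithinAt_const t _ _).sub (hFd i t ht))
    have h2 : (fun s => cc s * (16 * π - F i s)) = mH i := by
      funext s; rw [hccF]
    rw [h2] at h1
    convert h1 using 1
    simp only [hg_def]
    rw [hccF i t]; ring
  have hgnn : ∀ i, ∀ t ∈ Icc (0:ℝ) T, 0 ≤ g i t :=
    fun i t ht => aux_deriv_nonneg hT ht (hmono i) (hmHd i t ht)
  have hcccont : Continuous cc := by
    simp only [hcc_def]; continuity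
  have hGcont : ∀ i, ContinuousOn (G i) (Icc (0:ℝ) T) :=
    fun i => (hF i).continuousOn_derivWithin hUD le_rfl
  have hmHcont : ∀ i, ContinuousOn (mH i) (Icc (0:ℝ) T) := by
    intro i
    have h2 : mH i = fun t => cc t * (16 * π - F i t) := by funext t; rw [hccF]
    rw [h2]
    exact hcccont.continuousOn.mul (continuousOn_const.sub (hF i).continuousOn)
  have hgcont : ∀ i, ContinuousOn (g i) (Icc (0:ℝ) T) := fun i =>
    ((hmHcont i).div_const 2).sub (hcccont.continuousOn.mul (hGcont i))
  have hgint : ∀ i, IntervalIntegrable (g i) MeasureTheory.volume 0 T := by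
    intro i
    have h : ContinuousOn (g i) (uIcc (0:ℝ) T) := by
      rw [uIcc_of_le hT.le]; exact hgcont i
    exact h.intervalIntegrable
  have hFTC : ∀ i, ∫ t in (0:ℝ)..T, g i t = mH i T - mH i 0 := by
    intro i
    apply intervalIntegral.integral_eq_sub_of_hasDeriv_right_of_le hT.le (hmHcont i) _ (hgint i)
    intro t ht
    have h1 := hmHd i t (Ioo_subset_Icc_self ht)
    exact (h1.hasDerivAt (Icc_mem_nhds ht.1 ht.2)).hasDerivWithinAt
  set D : ℕ → ℝ := fun i => mH i T - mH i 0 with hD_def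
  set B : ℕ → ℝ := fun i => |mH i 0 - m| + D i with hB_def
  have hDnn : ∀ i, 0 ≤ D i := fun i =>
    sub_nonneg.2 (hmono i ⟨le_rfl, hT.le⟩ ⟨hT.le, le_rfl⟩ hT.le)
  have hmHbd : ∀ i, ∀ t ∈ Icc (0:ℝ) T, |mH i t - m| ≤ B i := by
    intro i t ht
    have hlo : mH i 0 ≤ mH i t := hmono i ⟨le_rfl, hT.le⟩ ht ht.1
    have hhi : mH i t ≤ mH i T := hmono i ht ⟨hT.le, le_rfl⟩ ht.2
    have h2 : m - mH i 0 ≤ |mH i 0 - m| := by rw [abs_sub_comm]; exact le_abs_self _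
    have h3 : mH i 0 - m ≤ |mH i 0 - m| := le_abs_self _
    have h4 := hDnn i
    simp only [hB_def, hD_def] at *
    rw [abs_le]
    constructor <;> linarith
  have hrel : ∀ i t, cc t * G i t = mH i t / 2 - g i t := by
    intro i t; simp only [hg_def]; ring
  have htgt_all : ∀ t, 16 * π / r₀ * m * Real.exp (-t / 2) = m / (2 * cc t) := by
    intro t
    rw [eq_div_iff (by positivity)]
    simp only [hcc_def]
    rw [show (-t / 2 : ℝ) = -(t / 2) by ring, Real.exp_neg]
    have hexp : Real.exp (t / 2) ≠ 0 := (Real.exp_pos _).ne'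
    field_simp
    ring
  have hccge : ∀ t ∈ Icc (0:ℝ) T, r₀ / (32 * π) ≤ cc t := by
    intro t ht
    have h1e : (1:ℝ) ≤ Real.exp (t / 2) := Real.one_le_exp (by linarith [ht.1])
    have hpos : (0:ℝ) < r₀ / (32 * π) := by positivity
    simp only [hcc_def]
    calc r₀ / (32 * π) = r₀ / (32 * π) * 1 := (mul_one _).symm
      _ ≤ r₀ / (32 * π) * Real.exp (t / 2) := by
          exact mul_le_mul_of_nonneg_left h1e hpos.le
  clear_value cc G g K D B
  have hkey : ∀ i, ∀ t ∈ Icc (0:ℝ) T,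
      |G i t - 16 * π / r₀ * m * Real.exp (-t / 2)| ≤ K * (B i / 2 + g i t) := by
    intro i t ht
    have hcne : cc t ≠ 0 := (hcpos t).ne'
    have heq : G i t - 16 * π / r₀ * m * Real.exp (-t / 2)
        = ((mH i t - m) / 2 - g i t) / cc t := by
      rw [htgt_all t]
      have h5 := hrel i t
      field_simp
      linear_combination 2 * h5
    rw [heq, abs_div, abs_of_pos (hcpos t)]
    have hb := abs_le.1 (hmHbd i t ht)
    have hgn := hgnn i t ht
    have h1 : |(mH i t - m) / 2 - g i t| ≤ B i / 2 + g i t := by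
      rw [abs_le]
      constructor <;> linarith [hb.1, hb.2, hgn]
    have hBnn : 0 ≤ B i / 2 + g i t := by
      have : (0:ℝ) ≤ |mH i 0 - m| := abs_nonneg _
      simp only [hB_def]
      have := hDnn i
      linarith
    calc |(mH i t - m) / 2 - g i t| / cc t
        ≤ (B i / 2 + g i t) / (r₀ / (32 * π)) :=
          div_le_div₀ hBnn h1 (by positivity) (hccge t ht)
      _ = K * (B i / 2 + g i t) := by
          rw [hK_def, div_div_eq_mul_div]; ring
  have hub : ∀ i, (∫ t in (0:ℝ)..T, |G i t - 16 * π / r₀ * m * Real.exp (-t / 2)|)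
      ≤ K * (B i / 2 * T + D i) := by
    intro i
    have htgtcont : Continuous (fun t : ℝ => 16 * π / r₀ * m * Real.exp (-t / 2)) :=
      continuous_const.mul (Real.continuous_exp.comp ((continuous_id.neg).div_const 2))
    have hint1 : IntervalIntegrable
        (fun t => |G i t - 16 * π / r₀ * m * Real.exp (-t / 2)|) MeasureTheory.volume 0 T := by
      have h : ContinuousOn (fun t => |G i t - 16 * π / r₀ * m * Real.exp (-t / 2)|)
          (uIcc (0:ℝ) T) := by
        rw [uIcc_of_le hT.le]
        exact ((hGcont i).sub htgtcont.continuousOn).abs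
      exact h.intervalIntegrable
    have hint2 : IntervalIntegrable
        (fun t => K * (B i / 2 + g i t)) MeasureTheory.volume 0 T := by
      have h : ContinuousOn (fun t => K * (B i / 2 + g i t)) (uIcc (0:ℝ) T) := by
        rw [uIcc_of_le hT.le]
        exact continuousOn_const.mul (continuousOn_const.add (hgcont i))
      exact h.intervalIntegrable
    have h1 := intervalIntegral.integral_mono_on hT.le hint1 hint2 (hkey i)
    have h2 : ∫ t in (0:ℝ)..T, K * (B i / 2 + g i t) = K * (B i / 2 * T + D i) := by
      rw [intervalIntegral.integral_const_mul,
        intervalIntegral.integral_add intervalIntegrable_const (hgint i),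
        intervalIntegral.integral_const, hFTC i]
      simp only [hD_def, smul_eq_mul]
      ring
    rw [h2] at h1
    exact h1
  have hlb : ∀ i, 0 ≤ ∫ t in (0:ℝ)..T, |G i t - 16 * π / r₀ * m * Real.exp (-t / 2)| :=
    fun i => intervalIntegral.integral_nonneg hT.le (fun u _ => abs_nonneg _)
  have hBlim : Tendsto B atTop (nhds 0) := by
    have h1 : Tendsto (fun i => |mH i 0 - m|) atTop (nhds 0) := by
      have h2 := (h0.sub_const m).abs
      simpa using h2
    have h3 := h1.add hdiff
    rw [hB_def]
    simpa using h3
  have hblim : Tendsto (fun i => K * (B i / 2 * T + D i)) atTop (nhds 0) := by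
    have h1 : Tendsto (fun i => B i / 2 * T + D i) atTop (nhds 0) := by
      have h2 := ((hBlim.div_const 2).mul_const T).add hdiff
      simpa using h2
    have h3 := h1.const_mul K
    simpa using h3
  exact squeeze_zero hlb hub hblim
end
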